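/- Let k be a field, let L ⊆ ℤ^4 be the subgroup generated by (1,1,0,−1) and (0,1,1,−1), and let M_{Λ(L)} ⊆ T be the lattice module of the Lawrence lifting. Let I_irr ⊆ S = k[x_1,…,x_4,y_1,…,y_4] be the ideal ⟨x_1, x_3⟩ ∩ ⟨x_2, x_4⟩ ∩ ⟨y_1, y_3⟩ ∩ ⟨y_2, y_4⟩ (the irrelevant ideal of Bl_{[1:0:0]}ℙ^2 × Bl_{[1:0:0]}ℙ^2). Then for every q ∈ I_irr, the element q · (x_2^{−1} y_2) of T lies in M_{Λ(L)}; that is, the cokernel of the inclusion of M_{Λ(L)} into the S-submodule of T generated by M_{Λ(L)} and x_2^{−1} y_2 is annihilated by I_irr. -/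

import Mathlib

open MvPolynomial

noncomputable section

/-- `S = k[x₁,…,x₄,y₁,…,y₄]`, indexed by `Fin 4 ⊕ Fin 4`. -/
abbrev LawrencePolyRing (k : Type*) [Field k] := MvPolynomial (Fin 4 ⊕ Fin 4) k

/-- `T = k[x₁^{±1},…,x₄^{±1},y₁^{±1},…,y₄^{±1}]`, the Laurent polynomial ring. -/
abbrev LaurentRing (k : Type*) [Field k] := AddMonoidAlgebra k ((Fin 4 ⊕ Fin 4) → ℤ)

/-- The Laurent monomial with exponent vector `e`. -/
def lMono (k : Type*) [Field k] (e : (Fin 4 ⊕ Fin 4) → ℤ) : LaurentRing k :=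
  AddMonoidAlgebra.single e 1

/-- The inclusion `S ⊆ T`. -/
def polyToLaurent (k : Type*) [Field k] : LawrencePolyRing k →+* LaurentRing k :=
  (MvPolynomial.eval₂Hom (algebraMap k (LaurentRing k)) fun v => lMono k (Pi.single v 1))

/-- `T` as an `S`-module via the inclusion `S ⊆ T`. -/
instance laurentModule (k : Type*) [Field k] : Module (LawrencePolyRing k) (LaurentRing k) :=
  Module.compHom (LaurentRing k) (polyToLaurent k)

/-- The lattice module `M_{Λ(L)} ⊆ T`: the `S`-submodule generated by the Laurent
monomials `x^u y^{−u}` for `u ∈ L`. -/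
def latticeModule (k : Type*) [Field k] (L : AddSubgroup (Fin 4 → ℤ)) :
    Submodule (LawrencePolyRing k) (LaurentRing k) :=
  Submodule.span (LawrencePolyRing k)
    {t : LaurentRing k | ∃ u ∈ L, t = lMono k (Sum.elim u (-u))}

/-- The lattice of principal divisors of `Bl_{[1:0:0]}ℙ²`, generated by
`(1,1,0,−1)` and `(0,1,1,−1)`. -/
def blowupLattice : AddSubgroup (Fin 4 → ℤ) :=
  AddSubgroup.closure ({![1, 1, 0, -1], ![0, 1, 1, -1]} : Set (Fin 4 → ℤ))

section AuxLemmas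

variable (k : Type*) [Field k]

lemma polyToLaurent_monomial (n : (Fin 4 ⊕ Fin 4) →₀ ℕ) :
    polyToLaurent k (monomial n 1) = lMono k (fun v => (n v : ℤ)) := by
  unfold polyToLaurent
  rw [eval₂Hom_monomial]
  simp only [map_one, one_mul]
  unfold lMono
  rw [Finsupp.prod]
  simp only [AddMonoidAlgebra.single_pow, one_pow]
  rw [AddMonoidAlgebra.prod_single]
  simp only [Finset.prod_const_one]
  congr 1
  funext w
  simp only [Finset.sum_apply, Pi.smul_apply, Pi.single_apply, smul_ite, smul_zero]
  rw [Finset.sum_ite_eq n.support w]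
  by_cases h : w ∈ n.support
  · simp [h]
  · simp [h, Finsupp.notMem_support_iff.mp h]

lemma monomial_smul_lMono (n : (Fin 4 ⊕ Fin 4) →₀ ℕ) (s : (Fin 4 ⊕ Fin 4) → ℤ) :
    (monomial n 1 : LawrencePolyRing k) • lMono k s
      = lMono k ((fun v => (n v : ℤ)) + s) := by
  show polyToLaurent k (monomial n 1) * lMono k s = _
  rw [polyToLaurent_monomial]
  unfold lMono
  rw [AddMonoidAlgebra.single_mul_single, one_mul]

lemma lMono_mem_latticeModule (s : (Fin 4 ⊕ Fin 4) → ℤ) (u : Fin 4 → ℤ)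
    (hu : u ∈ blowupLattice) (h : ∀ v, Sum.elim u (-u) v ≤ s v) :
    lMono k s ∈ latticeModule k blowupLattice := by
  have hbase : lMono k (Sum.elim u (-u)) ∈ latticeModule k blowupLattice :=
    Submodule.subset_span ⟨u, hu, rfl⟩
  set n : (Fin 4 ⊕ Fin 4) →₀ ℕ :=
    Finsupp.equivFunOnFinite.symm (fun v => (s v - Sum.elim u (-u) v).toNat) with hn
  have key : (monomial n 1 : LawrencePolyRing k) • lMono k (Sum.elim u (-u)) = lMono k s := by
    rw [monomial_smul_lMono]
    congr 1
    funext v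
    have : (n v : ℤ) = s v - Sum.elim u (-u) v := by
      rw [hn]
      show (((s v - Sum.elim u (-u) v).toNat : ℤ)) = _
      rw [Int.toNat_of_nonneg (by linarith [h v])]
    simp only [Pi.add_apply, this]
    ring
  rw [← key]
  exact Submodule.smul_mem _ _ hbase

end AuxLemmas

/-- Let `I_irr = ⟨x₁,x₃⟩ ∩ ⟨x₂,x₄⟩ ∩ ⟨y₁,y₃⟩ ∩ ⟨y₂,y₄⟩` be the irrelevant ideal of
`Bl_{[1:0:0]}ℙ² × Bl_{[1:0:0]}ℙ²`.  For every `q ∈ I_irr`, the element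
`q · (x₂^{−1} y₂)` of `T` lies in `M_{Λ(L)}`; i.e. the cokernel of
`M_{Λ(L)} ↪ M_{Λ(L)} + S·(x₂^{−1}y₂)` is annihilated by `I_irr`. -/
theorem irrelevant_ideal_annihilates_extra_monomial
    (k : Type*) [Field k] (q : LawrencePolyRing k)
    (hq : q ∈
      (Ideal.span {X (Sum.inl 0), X (Sum.inl 2)}
        ⊓ Ideal.span {X (Sum.inl 1), X (Sum.inl 3)}
        ⊓ Ideal.span {X (Sum.inr 0), X (Sum.inr 2)}
        ⊓ Ideal.span {X (Sum.inr 1), X (Sum.inr 3)} : Ideal (LawrencePolyRing k))) :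
    polyToLaurent k q
        * lMono k (Sum.elim (-(Pi.single 1 1) : Fin 4 → ℤ) (Pi.single 1 1))
      ∈ latticeModule k blowupLattice := by
  simp only [Submodule.mem_inf] at hq
  obtain ⟨⟨⟨-, h2⟩, h3⟩, -⟩ := hq
  rw [show ({X (Sum.inl 1), X (Sum.inl 3)} : Set (LawrencePolyRing k))
        = X '' {Sum.inl 1, Sum.inl 3} from (Set.image_pair _ _ _).symm,
    mem_ideal_span_X_image] at h2
  rw [show ({X (Sum.inr 0), X (Sum.inr 2)} : Set (LawrencePolyRing k))
        = X '' {Sum.inr 0, Sum.inr 2} from (Set.image_pair _ _ _).symm,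
    mem_ideal_span_X_image] at h3
  show q • lMono k (Sum.elim (-(Pi.single 1 1) : Fin 4 → ℤ) (Pi.single 1 1))
      ∈ latticeModule k blowupLattice
  nth_rewrite 1 [q.as_sum]
  rw [Finset.sum_smul]
  apply Submodule.sum_mem
  intro e he
  rw [show (monomial e (coeff e q) : LawrencePolyRing k) = C (coeff e q) * monomial e 1 by
        rw [C_mul_monomial, mul_one],
    mul_smul]
  apply Submodule.smul_mem
  rw [monomial_smul_lMono]
  have ha : (![1, 1, 0, -1] : Fin 4 → ℤ) ∈ blowupLattice :=
    AddSubgroup.subset_closure (Set.mem_insert _ _)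
  have hb : (![0, 1, 1, -1] : Fin 4 → ℤ) ∈ blowupLattice :=
    AddSubgroup.subset_closure (Set.mem_insert_of_mem _ rfl)
  by_cases h1 : e (Sum.inl 1) = 0
  · have h3e : e (Sum.inl 3) ≠ 0 := by
      obtain ⟨i, hi, hine⟩ := h2 e he
      simp only [Set.mem_insert_iff, Set.mem_singleton_iff] at hi
      rcases hi with rfl | rfl
      · exact absurd h1 hine
      · exact hine
    obtain ⟨j, hj, hjne⟩ := h3 e he
    simp only [Set.mem_insert_iff, Set.mem_singleton_iff] at hj
    rcases hj with rfl | rfl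
    · refine lMono_mem_latticeModule k _ (-![1, 1, 0, -1]) (neg_mem ha) ?_
      rintro (x | x) <;> fin_cases x <;> simp [Pi.single_apply] <;> omega
    · refine lMono_mem_latticeModule k _ (-![0, 1, 1, -1]) (neg_mem hb) ?_
      rintro (x | x) <;> fin_cases x <;> simp [Pi.single_apply] <;> omega
  · refine lMono_mem_latticeModule k _ 0 (zero_mem _) ?_
    rintro (x | x) <;> fin_cases x <;> simp [Pi.single_apply] <;> omega

end
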